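/- Let C and D be convex subsets of a topological real vector space X. Then fri C + fri D ⊆ fri(C + D), where + denotes the Minkowski sum. -/

import Mathlib

open Pointwise

/-- A face of a convex set `C`: a convex subset `F ⊆ C` such that whenever a point of `F`
lies in the open segment between two points of `C`, both endpoints belong to `F`. -/
def IsFace {X : Type*} [AddCommGroup X] [Module ℝ X] (C F : Set X) : Prop :=
  F ⊆ C ∧ Convex ℝ F ∧
    ∀ x ∈ F, ∀ y ∈ C, ∀ z ∈ C, x ∈ openSegment ℝ y z → y ∈ F ∧ z ∈ F

/-- The minimal face of `C` containing `x`: the intersection of all faces containing `x`. -/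
def minFace {X : Type*} [AddCommGroup X] [Module ℝ X] (C : Set X) (x : X) : Set X :=
  ⋂₀ {F | IsFace C F ∧ x ∈ F}

/-- The conic hull of a set. -/
def coneHull {X : Type*} [AddCommGroup X] [Module ℝ X] (S : Set X) : Set X :=
  {w | ∃ (a : ℝ) (s : X), 0 ≤ a ∧ s ∈ S ∧ w = a • s}

/-- The intrinsic core of a convex set. -/
def icr {X : Type*} [AddCommGroup X] [Module ℝ X] (C : Set X) : Set X :=
  {x ∈ C | ∀ y ∈ C, ∃ z ∈ C, x ∈ openSegment ℝ y z}

/-- The face relative interior of a convex set in a topological vector space. -/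
def fri {X : Type*} [AddCommGroup X] [Module ℝ X] [TopologicalSpace X] (C : Set X) : Set X :=
  {x ∈ C | C ⊆ closure (minFace C x)}

section Aux
variable {X : Type*} [AddCommGroup X] [Module ℝ X]

lemma isFace_self {C : Set X} (hC : Convex ℝ C) : IsFace C C :=
  ⟨le_refl _, hC, fun _ _ y hy z hz _ => ⟨hy, hz⟩⟩

lemma mem_minFace_self {C : Set X} {x : X} : x ∈ minFace C x :=
  fun _ hF => hF.2

lemma isFace_minFace {C : Set X} (hC : Convex ℝ C) {x : X} (hx : x ∈ C) :
    IsFace C (minFace C x) := by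
  refine ⟨?_, ?_, ?_⟩
  · exact fun c hc => hc C ⟨isFace_self hC, hx⟩
  · exact convex_sInter fun F hF => hF.1.2.1
  · intro w hw y hy z hz hseg
    refine ⟨fun F hF => ?_, fun F hF => ?_⟩
    · exact (hF.1.2.2 w (hw F hF) y hy z hz hseg).1
    · exact (hF.1.2.2 w (hw F hF) y hy z hz hseg).2

lemma minFace_subset_of_face {C F : Set X} {x : X} (hF : IsFace C F) (hxF : x ∈ F) :
    minFace C x ⊆ F :=
  Set.sInter_subset_of_mem ⟨hF, hxF⟩

lemma add_mem_openSegment {t y z w : X} (h : w ∈ openSegment ℝ y z) :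
    t + w ∈ openSegment ℝ (t + y) (t + z) := by
  obtain ⟨a, b, ha, hb, hab, hw⟩ := h
  exact ⟨a, b, ha, hb, hab, by rw [smul_add, smul_add, ← hw]; rw [show a•t+a•y+(b•t+b•z) = (a+b)•t + (a•y+b•z) by rw [add_smul]; abel, hab, one_smul]⟩

end Aux

section Key
variable {X : Type*} [AddCommGroup X] [Module ℝ X]

lemma minFace_add_subset {C D : Set X} (hC : Convex ℝ C) (hD : Convex ℝ D)
    {x y : X} (hx : x ∈ C) (hy : y ∈ D) :
    minFace C x + minFace D y ⊆ minFace (C + D) (x + y) := by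
  set M := minFace (C + D) (x + y) with hMdef
  have hCD : Convex ℝ (C + D) := hC.add hD
  have hxyM : x + y ∈ M := mem_minFace_self
  have hMface : IsFace (C + D) M := isFace_minFace hCD (Set.add_mem_add hx hy)
  -- F₂ : pullback face in D
  have hF2 : IsFace D {d ∈ D | x + d ∈ M} := by
    refine ⟨fun d hd => hd.1, ?_, ?_⟩
    · intro d1 hd1 d2 hd2 a b ha hb hab
      refine ⟨hD hd1.1 hd2.1 ha hb hab, ?_⟩
      have := hMface.2.1 hd1.2 hd2.2 ha hb hab
      have heq : a • (x + d1) + b • (x + d2) = x + (a • d1 + b • d2) := by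
        rw [smul_add, smul_add, show a•x+a•d1+(b•x+b•d2) = (a+b)•x + (a•d1+b•d2) by
          rw [add_smul]; abel, hab, one_smul]
      rwa [heq] at this
    · intro d hd u hu v hv hseg
      have hseg' : x + d ∈ openSegment ℝ (x + u) (x + v) := add_mem_openSegment hseg
      have := hMface.2.2 (x + d) hd.2 (x + u) (Set.add_mem_add hx hu)
        (x + v) (Set.add_mem_add hx hv) hseg'
      exact ⟨⟨hu, this.1⟩, ⟨hv, this.2⟩⟩
  have hFy2 : minFace D y ⊆ {d ∈ D | x + d ∈ M} :=
    minFace_subset_of_face hF2 ⟨hy, hxyM⟩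
  -- F₁ : pullback face in C
  have hFyD : minFace D y ⊆ D := (isFace_minFace hD hy).1
  have hF1 : IsFace C {c ∈ C | ∀ d ∈ minFace D y, c + d ∈ M} := by
    refine ⟨fun c hc => hc.1, ?_, ?_⟩
    · intro c1 hc1 c2 hc2 a b ha hb hab
      refine ⟨hC hc1.1 hc2.1 ha hb hab, fun d hd => ?_⟩
      have := hMface.2.1 (hc1.2 d hd) (hc2.2 d hd) ha hb hab
      have heq : a • (c1 + d) + b • (c2 + d) = a • c1 + b • c2 + d := by
        rw [smul_add, smul_add, show a•c1+a•d+(b•c2+b•d) = (a•c1+b•c2) + (a+b)•d by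
          rw [add_smul]; abel, hab, one_smul]
      rwa [heq] at this
    · intro c hc u hu v hv hseg
      have key : ∀ d ∈ minFace D y, (u + d ∈ M ∧ v + d ∈ M) := by
        intro d hd
        have hseg' : d + c ∈ openSegment ℝ (d + u) (d + v) := add_mem_openSegment hseg
        rw [add_comm d c, add_comm d u, add_comm d v] at hseg'
        exact hMface.2.2 (c + d) (hc.2 d hd) (u + d) (Set.add_mem_add hu (hFyD hd))
          (v + d) (Set.add_mem_add hv (hFyD hd)) hseg'
      exact ⟨⟨hu, fun d hd => (key d hd).1⟩, ⟨hv, fun d hd => (key d hd).2⟩⟩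
  have hFx1 : minFace C x ⊆ {c ∈ C | ∀ d ∈ minFace D y, c + d ∈ M} :=
    minFace_subset_of_face hF1 ⟨hx, fun d hd => (hFy2 hd).2⟩
  rintro w ⟨c, hc, d, hd, rfl⟩
  exact (hFx1 hc).2 d hd

end Key

/-- `fri C + fri D ⊆ fri (C + D)` (Minkowski sum). -/
theorem fri_add_subset {X : Type*} [AddCommGroup X] [Module ℝ X] [TopologicalSpace X]
    [IsTopologicalAddGroup X] [ContinuousSMul ℝ X]
    (C D : Set X) (hC : Convex ℝ C) (hD : Convex ℝ D) :
    fri C + fri D ⊆ fri (C + D) := by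
  rintro _ ⟨x, hx, y, hy, rfl⟩
  obtain ⟨hxC, hxcl⟩ := hx
  obtain ⟨hyD, hycl⟩ := hy
  refine ⟨Set.add_mem_add hxC hyD, ?_⟩
  rintro _ ⟨c, hc, d, hd, rfl⟩
  have h1 : c + d ∈ closure (minFace C x + minFace D y) :=
    map_mem_closure₂ continuous_add (hxcl hc) (hycl hd)
      (fun a ha b hb => Set.add_mem_add ha hb)
  exact closure_mono (minFace_add_subset hC hD hxC hyD) h1
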